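/- Let η be a real number with 0 < η < π/6 and let ξ ∈ (−2η, 0). Set ϖ0 = 1 + 2cos(4η) and τ = sin(6η)·sin(ξ+2η) / (sin(2η)·sin(ξ+6η)), and assume τ·(1 − ϖ0) + ϖ0 ≠ 0. Then τ ≠ 1, τ + ϖ0 ≠ 0, and τ·(1 + ϖ0)/((τ − 1)·(τ + ϖ0)) + ϖ0/(τ·(1 − ϖ0) + ϖ0) = sin(ξ+6η)·sin(ξ+2η)/(sin(ξ)·sin(ξ+4η)) − sin(ξ+6η)/sin(ξ−2η). -/

import Mathlib

set_option maxHeartbeats 1600000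

/-- Closed parametric form of the shear slope function s̄(τ) at μ=0, λ=5η. -/
theorem stmt9 (η ξ : ℝ) (h1 : 0 < η) (h2 : η < Real.pi/6)
    (hξ : ξ ∈ Set.Ioo (-(2*η)) 0)
    (ϖ τ : ℝ) (hϖ : ϖ = 1 + 2*Real.cos (4*η))
    (hτ : τ = Real.sin (6*η) * Real.sin (ξ + 2*η) / (Real.sin (2*η) * Real.sin (ξ + 6*η)))
    (hden : τ * (1 - ϖ) + ϖ ≠ 0) :
    τ ≠ 1 ∧ τ + ϖ ≠ 0 ∧
    τ * (1 + ϖ) / ((τ - 1) * (τ + ϖ)) + ϖ / (τ * (1 - ϖ) + ϖ)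
      = Real.sin (ξ + 6*η) * Real.sin (ξ + 2*η) / (Real.sin ξ * Real.sin (ξ + 4*η))
        - Real.sin (ξ + 6*η) / Real.sin (ξ - 2*η) := by
  obtain ⟨hξ1, hξ2⟩ := hξ
  have hpi := Real.pi_gt_three
  -- positivity facts
  have hs2 : 0 < Real.sin (2*η) := Real.sin_pos_of_pos_of_lt_pi (by linarith) (by linarith)
  have hc2 : 0 < Real.cos (2*η) := Real.cos_pos_of_mem_Ioo ⟨by linarith [Real.pi_pos], by linarith⟩
  have hb : 0 < Real.sin (6*η) := Real.sin_pos_of_pos_of_lt_pi (by linarith) (by linarith)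
  have hs2' : 0 < Real.sin (ξ + 2*η) := Real.sin_pos_of_pos_of_lt_pi (by linarith) (by linarith)
  have hs4' : 0 < Real.sin (ξ + 4*η) := Real.sin_pos_of_pos_of_lt_pi (by linarith) (by linarith)
  have hs6' : 0 < Real.sin (ξ + 6*η) := Real.sin_pos_of_pos_of_lt_pi (by linarith) (by linarith)
  have hsx : Real.sin ξ < 0 := by
    have : 0 < Real.sin (-ξ) := Real.sin_pos_of_pos_of_lt_pi (by linarith) (by linarith)
    rw [Real.sin_neg] at this; linarith
  have hsm : Real.sin (ξ - 2*η) < 0 := by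
    have : 0 < Real.sin (-(ξ - 2*η)) := Real.sin_pos_of_pos_of_lt_pi (by linarith) (by linarith)
    rw [Real.sin_neg] at this; linarith
  -- expansions
  have e4s : Real.sin (4*η) = 2*Real.sin (2*η)*Real.cos (2*η) := by
    rw [show (4:ℝ)*η = 2*(2*η) by ring, Real.sin_two_mul]
  have e4c : Real.cos (4*η) = 2*Real.cos (2*η)^2 - 1 := by
    rw [show (4:ℝ)*η = 2*(2*η) by ring, Real.cos_two_mul]
  have e6s : Real.sin (6*η) = 4*Real.sin (2*η)*Real.cos (2*η)^2 - Real.sin (2*η) := by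
    rw [show (6:ℝ)*η = 2*η + 4*η by ring, Real.sin_add, e4s, e4c]; ring
  have e6c : Real.cos (6*η) = 2*Real.cos (2*η)^3 - Real.cos (2*η) - 2*Real.sin (2*η)^2*Real.cos (2*η) := by
    rw [show (6:ℝ)*η = 2*η + 4*η by ring, Real.cos_add, e4s, e4c]; ring
  have eA : Real.sin (ξ + 2*η) = Real.sin ξ * Real.cos (2*η) + Real.cos ξ * Real.sin (2*η) :=
    Real.sin_add ξ (2*η)
  have eB : Real.sin (ξ + 4*η) = Real.sin ξ * (2*Real.cos (2*η)^2 - 1) + Real.cos ξ * (2*Real.sin (2*η)*Real.cos (2*η)) := by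
    rw [Real.sin_add, e4s, e4c]
  have eC : Real.sin (ξ + 6*η) = Real.sin ξ * (2*Real.cos (2*η)^3 - Real.cos (2*η) - 2*Real.sin (2*η)^2*Real.cos (2*η)) + Real.cos ξ * (4*Real.sin (2*η)*Real.cos (2*η)^2 - Real.sin (2*η)) := by
    rw [Real.sin_add, e6s, e6c]
  have eD : Real.sin (ξ - 2*η) = Real.sin ξ * Real.cos (2*η) - Real.cos ξ * Real.sin (2*η) :=
    Real.sin_sub ξ (2*η)
  have pyth := Real.sin_sq_add_cos_sq (2*η)
  have pythx := Real.sin_sq_add_cos_sq ξ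
  -- key closed forms
  have hϖ' : ϖ = Real.sin (6*η) / Real.sin (2*η) := by
    rw [hϖ, e6s, e4c]; field_simp; ring
  have hA : τ - 1 = 2*Real.cos (2*η)*Real.sin ξ / Real.sin (ξ + 6*η) := by
    rw [hτ, div_sub_one (by positivity), div_eq_div_iff (by positivity) hs6'.ne']
    rw [eA, eC, e6s]
    linear_combination (2*Real.sin (2*η)*Real.cos (2*η)*Real.sin ξ*
      (Real.sin ξ * (2*Real.cos (2*η)^3 - Real.cos (2*η) - 2*Real.sin (2*η)^2*Real.cos (2*η)) + Real.cos ξ * (4*Real.sin (2*η)*Real.cos (2*η)^2 - Real.sin (2*η)))) * pyth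
  have hB : τ + ϖ = 2*Real.sin (6*η)*Real.cos (2*η)*Real.sin (ξ + 4*η) / (Real.sin (2*η) * Real.sin (ξ + 6*η)) := by
    rw [hτ, hϖ']
    field_simp
    rw [show η*2 = 2*η by ring, show η*4 = 4*η by ring, div_left_inj' hs2.ne', eA, eB, eC]
    linear_combination (-(2*Real.cos (2*η)*Real.sin ξ)) * pyth
  have hC : τ*(1-ϖ)+ϖ = -(Real.sin (6*η)*Real.sin (ξ - 2*η)) / (Real.sin (2*η) * Real.sin (ξ + 6*η)) := by
    rw [hτ, hϖ']
    field_simp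
    rw [show η*2 = 2*η by ring, ← neg_div, div_left_inj' hs2.ne', ← hϖ', hϖ, e4c, eA, eC, eD]
    linear_combination (-(2*Real.cos (2*η)*Real.sin ξ)) * pyth
  have hD : τ*(1+ϖ) = 4*Real.sin (6*η)*Real.sin (ξ + 2*η)*Real.cos (2*η)^2 / (Real.sin (2*η) * Real.sin (ξ + 6*η)) := by
    rw [hτ, hϖ']
    field_simp
    rw [show η*2 = 2*η by ring, ← hϖ', hϖ, e4c]
    ring
  -- conclusions
  have hτ1 : τ ≠ 1 := by
    intro h
    have hneg : 2*Real.cos (2*η)*Real.sin ξ / Real.sin (ξ + 6*η) < 0 := by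
      apply div_neg_of_neg_of_pos _ hs6'
      nlinarith
    rw [← hA, h] at hneg
    linarith
  have hτϖ : τ + ϖ ≠ 0 := by
    rw [hB]
    positivity
  refine ⟨hτ1, hτϖ, ?_⟩
  rw [hD, hA, hB, hC, hϖ']
  set A := Real.sin (2*η) with hAdef
  set C := Real.cos (2*η) with hCdef
  set B := Real.sin (6*η) with hBdef
  set X := Real.sin ξ with hXdef
  set S2 := Real.sin (ξ + 2*η) with hS2def
  set S4 := Real.sin (ξ + 4*η) with hS4def
  set S6 := Real.sin (ξ + 6*η) with hS6def
  set SM := Real.sin (ξ - 2*η) with hSMdef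
  clear_value A C B X S2 S4 S6 SM
  have n1 : A ≠ 0 := hs2.ne'
  have n2 : C ≠ 0 := hc2.ne'
  have n3 : B ≠ 0 := hb.ne'
  have n4 : X ≠ 0 := hsx.ne
  have n5 : S4 ≠ 0 := hs4'.ne'
  have n6 : S6 ≠ 0 := hs6'.ne'
  have n7 : SM ≠ 0 := hsm.ne
  rw [div_mul_div_comm]
  field_simp
  ring
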